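/- Let p be holomorphic on the unit disk D with p(0) = 1 and power series p(z) = 1 + ∑_{n≥1} b_n z^n, and let 0 ≤ α < 1. If Re p(z) ≥ α for all z ∈ D, then |b_2 - b_1²/(2(1-α))| ≤ 2(1-α) - |b_1|²/(2(1-α)). -/

import Mathlib

open Complex Metric MeasureTheory intervalIntegral Filter Topology

lemma myconj {f : ℝ → ℂ} {a b : ℝ} :
    ∫ x in a..b, (starRingEnd ℂ) (f x) = (starRingEnd ℂ) (∫ x in a..b, f x) := by
  simp only [intervalIntegral, ← integral_conj, map_sub]

lemma myre {f : ℝ → ℂ} {a b : ℝ} (h : a ≤ b) (hf : IntervalIntegrable f volume a b) :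
    ∫ x in a..b, (f x).re = (∫ x in a..b, f x).re := by
  rw [integral_of_le h, integral_of_le h, ← RCLike.re_to_complex, ← integral_re hf.1]
  rfl

lemma myexp (k : ℤ) (hk : k ≠ 0) :
    ∫ θ in (0:ℝ)..(2*Real.pi), Complex.exp ((k:ℂ) * θ * Complex.I) = 0 := by
  have h : ∀ θ : ℝ, (k:ℂ) * θ * Complex.I = ((k:ℂ)*Complex.I) * θ := by intro θ; ring
  simp only [h]
  rw [integral_exp_mul_complex (by simp [hk, Complex.I_ne_zero])]
  have h2 : ((k:ℂ)*Complex.I) * ((2*Real.pi : ℝ):ℂ) = (k:ℂ) * (2*(Real.pi:ℂ) * Complex.I) := by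
    push_cast; ring
  rw [h2, Complex.exp_int_mul_two_pi_mul_I]
  simp

section
variable {p : ℂ → ℂ} {r : ℝ}

lemma memCirc (hr0 : 0 < r) (hr1 : r < 1) (θ : ℝ) : circleMap 0 r θ ∈ ball (0:ℂ) 1 := by
  simp only [mem_ball, dist_zero_right]
  calc ‖circleMap 0 r θ‖ = |r| := by simp
    _ < 1 := by rwa [abs_of_pos hr0]

lemma contCirc (hp : DifferentiableOn ℂ p (ball 0 1)) (hr0 : 0 < r) (hr1 : r < 1) :
    Continuous fun θ : ℝ => p (circleMap 0 r θ) := by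
  apply continuous_iff_continuousAt.2
  intro θ
  exact ((hp.differentiableAt (isOpen_ball.mem_nhds (memCirc hr0 hr1 θ))).continuousAt).comp
    (continuous_circleMap 0 r).continuousAt

lemma coeffEq (hp : DifferentiableOn ℂ p (ball 0 1)) (hr0 : 0 < r) (hr1 : r < 1)
    (b : ℕ → ℂ) (hb : ∀ n, b n = iteratedDeriv n p 0 / (Nat.factorial n)) (n : ℕ) :
    b n = (cauchyPowerSeries p 0 r).coeff n := by
  lift r to NNReal using hr0.le with R hR
  have hps : HasFPowerSeriesOnBall p (cauchyPowerSeries p 0 R) 0 R :=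
    (hp.mono (closedBall_subset_ball hr1)).hasFPowerSeriesOnBall (by exact_mod_cast hr0)
  have h := hps.factorial_smul (1:ℂ) n
  rw [hb n, iteratedDeriv_eq_iteratedFDeriv, ← h]
  simp only [nsmul_eq_mul, FormalMultilinearSeries.coeff]
  field_simp [Nat.factorial_ne_zero]
  rfl

end

section
variable {p : ℂ → ℂ} {r : ℝ}

lemma intC1 (hp : DifferentiableOn ℂ p (ball 0 1)) (hr0 : 0 < r) (hr1 : r < 1)
    (b : ℕ → ℂ) (hb : ∀ n, b n = iteratedDeriv n p 0 / (Nat.factorial n)) (n : ℕ) :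
    ∫ θ in (0:ℝ)..(2*Real.pi), Complex.exp (-(n:ℂ) * θ * Complex.I) * p (circleMap 0 r θ)
      = 2 * Real.pi * r^n * b n := by
  have hco := coeffEq hp hr0 hr1 b hb n
  have happ := cauchyPowerSeries_apply p 0 r n 1
  have hcoeff : (cauchyPowerSeries p 0 r).coeff n = cauchyPowerSeries p 0 r n fun _ => 1 := rfl
  rw [hcoeff, happ] at hco
  rw [circleIntegral] at hco
  have hrc : (r:ℂ) ≠ 0 := by exact_mod_cast hr0.ne'
  have hint : ∀ θ : ℝ, deriv (circleMap 0 r) θ •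
      ((1 / (circleMap 0 r θ - 0)) ^ n • (circleMap 0 r θ - 0)⁻¹ • p (circleMap 0 r θ))
      = (Complex.I * ((r:ℂ)^n)⁻¹) * (Complex.exp (-(n:ℂ) * θ * Complex.I) * p (circleMap 0 r θ)) := by
    intro θ
    have hz : circleMap 0 r θ = (r:ℂ) * Complex.exp (θ * Complex.I) := circleMap_zero r θ
    have hexpne : Complex.exp ((θ:ℂ) * Complex.I) ≠ 0 := Complex.exp_ne_zero _
    have hexp : (Complex.exp ((θ:ℂ) * Complex.I))^n = Complex.exp ((n:ℂ) * θ * Complex.I) := by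
      rw [← Complex.exp_nat_mul]; ring_nf
    have hexpneg : Complex.exp (-(n:ℂ) * θ * Complex.I)
        = (Complex.exp ((n:ℂ) * θ * Complex.I))⁻¹ := by
      rw [← Complex.exp_neg]; ring_nf
    rw [deriv_circleMap, smul_eq_mul, smul_eq_mul, smul_eq_mul, hz, hexpneg, ← hexp]
    field_simp
    simp only [sub_zero, one_div, inv_pow, mul_pow]
    field_simp
  simp only [hint] at hco
  rw [intervalIntegral.integral_const_mul] at hco
  have hpi : (Real.pi : ℂ) ≠ 0 := by exact_mod_cast Real.pi_ne_zero
  have : b n = (2 * (Real.pi:ℂ) * Complex.I)⁻¹ * ((Complex.I * ((r:ℂ)^n)⁻¹) *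
      ∫ θ in (0:ℝ)..(2*Real.pi), Complex.exp (-(n:ℂ) * θ * Complex.I) * p (circleMap 0 r θ)) := by
    rw [hco]; simp [smul_eq_mul]
  field_simp [Complex.I_ne_zero, hpi, hrc] at this
  apply mul_left_cancel₀ Complex.I_ne_zero
  simp only [neg_mul]
  have e : ∀ θ:ℝ, -(Complex.I * n * θ) = -((n:ℂ) * θ * Complex.I) := by intro θ; ring
  simp only [e] at this
  rw [← this]; ring

lemma intC2 (hp : DifferentiableOn ℂ p (ball 0 1)) (hr0 : 0 < r) (hr1 : r < 1)
    (n : ℕ) (hn : n ≠ 0) :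
    ∫ θ in (0:ℝ)..(2*Real.pi), Complex.exp ((n:ℂ) * θ * Complex.I) * p (circleMap 0 r θ) = 0 := by
  obtain ⟨m, rfl⟩ := Nat.exists_eq_succ_of_ne_zero hn
  have hzero : (∮ z in C(0, r), z^m * p z) = 0 := by
    apply Complex.circleIntegral_eq_zero_of_differentiable_on_off_countable hr0.le
      Set.countable_empty
    · exact ((continuous_pow m).continuousOn).mul
        ((hp.continuousOn).mono (closedBall_subset_ball hr1))
    · intro z hz
      exact (differentiableAt_pow m).mul
        (hp.differentiableAt (isOpen_ball.mem_nhds (ball_subset_ball hr1.le hz.1)))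
  rw [circleIntegral] at hzero
  have hrc : (r:ℂ) ≠ 0 := by exact_mod_cast hr0.ne'
  have hint : ∀ θ : ℝ, deriv (circleMap 0 r) θ • ((circleMap 0 r θ)^m * p (circleMap 0 r θ))
      = (Complex.I * (r:ℂ)^(m+1)) *
        (Complex.exp (((m+1:ℕ):ℂ) * θ * Complex.I) * p (circleMap 0 r θ)) := by
    intro θ
    have hz : circleMap 0 r θ = (r:ℂ) * Complex.exp (θ * Complex.I) := circleMap_zero r θ
    have hexp : (Complex.exp ((θ:ℂ) * Complex.I))^(m+1)
        = Complex.exp (((m+1:ℕ):ℂ) * θ * Complex.I) := by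
      rw [← Complex.exp_nat_mul]; ring_nf
    rw [deriv_circleMap, smul_eq_mul, hz, ← hexp]
    ring
  simp only [hint] at hzero
  rw [intervalIntegral.integral_const_mul] at hzero
  rcases mul_eq_zero.1 hzero with h | h
  · exact absurd h (by simp [Complex.I_ne_zero, hrc])
  · exact h

variable {α : ℝ}

lemma hconjE (n : ℕ) (θ : ℝ) : (starRingEnd ℂ) (Complex.exp ((n:ℂ) * θ * Complex.I))
    = Complex.exp (-(n:ℂ) * θ * Complex.I) := by
  rw [← Complex.exp_conj]
  congr 1
  simp [map_mul, Complex.conj_I]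

lemma intMu (hp : DifferentiableOn ℂ p (ball 0 1)) (hr0 : 0 < r) (hr1 : r < 1)
    (b : ℕ → ℂ) (hb : ∀ n, b n = iteratedDeriv n p 0 / (Nat.factorial n)) (n : ℕ) (hn : n ≠ 0) :
    ∫ θ in (0:ℝ)..(2*Real.pi),
      ((((p (circleMap 0 r θ)).re - α : ℝ)):ℂ) * Complex.exp (-(n:ℂ) * θ * Complex.I)
    = Real.pi * r^n * b n := by
  have hc := contCirc hp hr0 hr1
  have hEn : ∀ k : ℂ, Continuous fun θ:ℝ => Complex.exp (k * θ * Complex.I) := by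
    intro k
    apply Complex.continuous_exp.comp
    continuity
  have hsplit : ∀ θ : ℝ, ((((p (circleMap 0 r θ)).re - α : ℝ)):ℂ)
        * Complex.exp (-(n:ℂ) * θ * Complex.I)
      = (1/2:ℂ) * (Complex.exp (-(n:ℂ) * θ * Complex.I) * p (circleMap 0 r θ))
        + (1/2:ℂ) * (starRingEnd ℂ) (Complex.exp ((n:ℂ) * θ * Complex.I) * p (circleMap 0 r θ))
        - (α:ℂ) * Complex.exp (-(n:ℂ) * θ * Complex.I) := by
    intro θ
    have hac := Complex.add_conj (p (circleMap 0 r θ))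
    push_cast at hac
    rw [map_mul, hconjE]
    push_cast
    linear_combination (-(Complex.exp (-(n:ℂ) * θ * Complex.I)) / 2) * hac
  have hi1 : IntervalIntegrable
      (fun θ:ℝ => (1/2:ℂ) * (Complex.exp (-(n:ℂ) * θ * Complex.I) * p (circleMap 0 r θ)))
      volume 0 (2*Real.pi) :=
    (continuous_const.mul ((hEn _).mul hc)).intervalIntegrable _ _
  have hi2 : IntervalIntegrable
      (fun θ:ℝ => (1/2:ℂ) * (starRingEnd ℂ) (Complex.exp ((n:ℂ) * θ * Complex.I)
        * p (circleMap 0 r θ))) volume 0 (2*Real.pi) :=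
    (continuous_const.mul (Complex.continuous_conj.comp ((hEn _).mul hc))).intervalIntegrable _ _
  have hi3 : IntervalIntegrable
      (fun θ:ℝ => (α:ℂ) * Complex.exp (-(n:ℂ) * θ * Complex.I)) volume 0 (2*Real.pi) :=
    (continuous_const.mul (hEn _)).intervalIntegrable _ _
  have hme : ∫ θ in (0:ℝ)..(2*Real.pi), Complex.exp (-(n:ℂ) * θ * Complex.I) = 0 := by
    have := myexp (-(n:ℤ)) (by simpa using hn)
    rw [← this]
    congr 1 with θ
    push_cast
    ring_nf
  simp only [hsplit]
  rw [intervalIntegral.integral_sub (hi1.add hi2) hi3, intervalIntegral.integral_add hi1 hi2,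
    intervalIntegral.integral_const_mul, intervalIntegral.integral_const_mul,
    intervalIntegral.integral_const_mul, myconj, intC1 hp hr0 hr1 b hb n,
    intC2 hp hr0 hr1 n hn, hme]
  simp
  ring

lemma intMu0 (hp : DifferentiableOn ℂ p (ball 0 1)) (hr0 : 0 < r) (hr1 : r < 1)
    (h0 : p 0 = 1)
    (b : ℕ → ℂ) (hb : ∀ n, b n = iteratedDeriv n p 0 / (Nat.factorial n)) :
    ∫ θ in (0:ℝ)..(2*Real.pi), ((((p (circleMap 0 r θ)).re - α : ℝ)):ℂ)
    = 2 * Real.pi * (1 - α) := by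
  have hc := contCirc hp hr0 hr1
  have hb0 : b 0 = 1 := by rw [hb 0]; simp [iteratedDeriv_zero, h0]
  have hp0 : ∫ θ in (0:ℝ)..(2*Real.pi), p (circleMap 0 r θ) = 2 * Real.pi := by
    have := intC1 hp hr0 hr1 b hb 0
    simp only [Nat.cast_zero, neg_zero, zero_mul, Complex.exp_zero, one_mul, pow_zero,
      mul_one, hb0] at this
    exact this
  have hsplit : ∀ θ : ℝ, ((((p (circleMap 0 r θ)).re - α : ℝ)):ℂ)
      = (1/2:ℂ) * p (circleMap 0 r θ)
        + (1/2:ℂ) * (starRingEnd ℂ) (p (circleMap 0 r θ)) - (α:ℂ) := by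
    intro θ
    have hac := Complex.add_conj (p (circleMap 0 r θ))
    push_cast at hac
    push_cast
    linear_combination -hac / 2
  have hi1 : IntervalIntegrable (fun θ:ℝ => (1/2:ℂ) * p (circleMap 0 r θ))
      volume 0 (2*Real.pi) := (continuous_const.mul hc).intervalIntegrable _ _
  have hi2 : IntervalIntegrable (fun θ:ℝ => (1/2:ℂ) * (starRingEnd ℂ) (p (circleMap 0 r θ)))
      volume 0 (2*Real.pi) :=
    (continuous_const.mul (Complex.continuous_conj.comp hc)).intervalIntegrable _ _
  simp only [hsplit]
  rw [intervalIntegral.integral_sub (hi1.add hi2) (intervalIntegrable_const),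
    intervalIntegral.integral_add hi1 hi2, intervalIntegral.integral_const_mul,
    intervalIntegral.integral_const_mul, myconj, hp0, intervalIntegral.integral_const]
  simp
  rw [map_ofNat]
  push_cast
  ring

lemma main_r (hα1 : α < 1) (hp : DifferentiableOn ℂ p (ball 0 1)) (h0 : p 0 = 1)
    (b : ℕ → ℂ) (hb : ∀ n, b n = iteratedDeriv n p 0 / (Nat.factorial n))
    (hre : ∀ z ∈ ball (0:ℂ) 1, α ≤ (p z).re)
    (hr0 : 0 < r) (hr1 : r < 1) :
    ‖b 2 - b 1 ^ 2 / (2 * (1 - (α:ℂ)))‖ ≤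
      2 * (1 - α) / r^2 - (‖b 1‖) ^ 2 / (2 * (1 - α)) := by
  have hc := contCirc hp hr0 hr1
  have hα : (0:ℝ) < 1 - α := by linarith
  have hαc : (2:ℂ) * (1 - (α:ℂ)) ≠ 0 := by
    have : ((1 - α : ℝ):ℂ) ≠ 0 := Complex.ofReal_ne_zero.2 hα.ne'
    push_cast at this
    simp [this]
  set g : ℝ → ℝ := fun θ => (p (circleMap 0 r θ)).re - α with hgdef
  have hg0 : ∀ θ, 0 ≤ g θ := fun θ => sub_nonneg.2 (hre _ (memCirc hr0 hr1 θ))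
  have hgc : Continuous fun θ => ((g θ : ℝ) : ℂ) :=
    Complex.continuous_ofReal.comp ((Complex.continuous_re.comp hc).sub continuous_const)
  set En : ℕ → ℝ → ℂ := fun n θ => Complex.exp (-(n:ℂ) * θ * Complex.I) with hEndef
  have hEcont : ∀ n, Continuous (En n) := by
    intro n
    apply Complex.continuous_exp.comp
    continuity
  set w : ℂ := b 1 * r / (2 * (1 - (α:ℂ))) with hwdef
  have hE2 : ∀ θ, (En 1 θ)^2 = En 2 θ := by
    intro θ
    simp only [hEndef, sq, ← Complex.exp_add]
    ring_nf
  have hE1mul : ∀ θ, En 1 θ * (starRingEnd ℂ) (En 1 θ) = 1 := by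
    intro θ
    rw [Complex.mul_conj]
    have habs1 : ‖En 1 θ‖ = 1 := by
      simp only [hEndef, Complex.norm_exp]
      norm_num
    rw [Complex.normSq_eq_norm_sq, habs1]
    norm_num
  have hm0 : ∫ θ in (0:ℝ)..(2*Real.pi), ((g θ : ℝ):ℂ) = 2 * Real.pi * (1 - α) :=
    intMu0 (α := α) hp hr0 hr1 h0 b hb
  have hm1 : ∫ θ in (0:ℝ)..(2*Real.pi), ((g θ : ℝ):ℂ) * En 1 θ = Real.pi * r^1 * b 1 :=
    intMu (α := α) hp hr0 hr1 b hb 1 one_ne_zero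
  have hm2 : ∫ θ in (0:ℝ)..(2*Real.pi), ((g θ : ℝ):ℂ) * En 2 θ = Real.pi * r^2 * b 2 :=
    intMu (α := α) hp hr0 hr1 b hb 2 two_ne_zero
  have hm1c : ∫ θ in (0:ℝ)..(2*Real.pi), ((g θ : ℝ):ℂ) * (starRingEnd ℂ) (En 1 θ)
      = Real.pi * r * (starRingEnd ℂ) (b 1) := by
    have hpt : ∀ θ:ℝ, ((g θ : ℝ):ℂ) * (starRingEnd ℂ) (En 1 θ)
        = (starRingEnd ℂ) (((g θ : ℝ):ℂ) * En 1 θ) := by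
      intro θ
      rw [map_mul, Complex.conj_ofReal]
    simp only [hpt]
    rw [myconj, hm1]
    simp [map_mul, Complex.conj_ofReal]
  -- integrability
  have hiK2 : IntervalIntegrable (fun θ:ℝ => ((g θ : ℝ):ℂ) * En 2 θ) volume 0 (2*Real.pi) :=
    (hgc.mul (hEcont 2)).intervalIntegrable _ _
  have hiK1 : IntervalIntegrable (fun θ:ℝ => (2*w) * (((g θ : ℝ):ℂ) * En 1 θ)) volume 0 (2*Real.pi) :=
    (continuous_const.mul (hgc.mul (hEcont 1))).intervalIntegrable _ _
  have hiK0 : IntervalIntegrable (fun θ:ℝ => w^2 * ((g θ : ℝ):ℂ)) volume 0 (2*Real.pi) :=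
    (continuous_const.mul hgc).intervalIntegrable _ _
  -- K computation
  have hK : ∫ θ in (0:ℝ)..(2*Real.pi), ((g θ : ℝ):ℂ) * (En 1 θ - w)^2
      = Real.pi * r^2 * (b 2 - b 1 ^ 2 / (2 * (1 - (α:ℂ)))) := by
    have hsplitK : ∀ θ:ℝ, ((g θ : ℝ):ℂ) * (En 1 θ - w)^2
        = ((g θ : ℝ):ℂ) * En 2 θ - (2*w) * (((g θ : ℝ):ℂ) * En 1 θ)
          + w^2 * ((g θ : ℝ):ℂ) := by
      intro θ
      rw [← hE2]
      ring
    simp only [hsplitK]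
    rw [intervalIntegral.integral_add (hiK2.sub hiK1) hiK0,
      intervalIntegral.integral_sub hiK2 hiK1,
      intervalIntegral.integral_const_mul, intervalIntegral.integral_const_mul,
      hm0, hm1, hm2, hwdef]
    field_simp
    ring
  -- L computation
  have hiL1 : IntervalIntegrable (fun θ:ℝ => (starRingEnd ℂ) w * (((g θ : ℝ):ℂ) * En 1 θ))
      volume 0 (2*Real.pi) :=
    (continuous_const.mul (hgc.mul (hEcont 1))).intervalIntegrable _ _
  have hiL2 : IntervalIntegrable (fun θ:ℝ => w * (((g θ : ℝ):ℂ) * (starRingEnd ℂ) (En 1 θ)))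
      volume 0 (2*Real.pi) :=
    (continuous_const.mul (hgc.mul ((Complex.continuous_conj).comp (hEcont 1)))).intervalIntegrable _ _
  have hiL3 : IntervalIntegrable (fun θ:ℝ => (w * (starRingEnd ℂ) w) * ((g θ : ℝ):ℂ))
      volume 0 (2*Real.pi) :=
    (continuous_const.mul hgc).intervalIntegrable _ _
  have hiGC : IntervalIntegrable (fun θ:ℝ => ((g θ : ℝ):ℂ)) volume 0 (2*Real.pi) :=
    hgc.intervalIntegrable _ _
  have hL : ∫ θ in (0:ℝ)..(2*Real.pi), ((g θ : ℝ):ℂ) * ((En 1 θ - w) * (starRingEnd ℂ) (En 1 θ - w))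
      = ((2*Real.pi*(1-α) - Real.pi * r^2 * (‖b 1‖)^2/(2*(1-α)) : ℝ) : ℂ) := by
    have hsplitL : ∀ θ:ℝ, ((g θ : ℝ):ℂ) * ((En 1 θ - w) * (starRingEnd ℂ) (En 1 θ - w))
        = ((g θ : ℝ):ℂ) - (starRingEnd ℂ) w * (((g θ : ℝ):ℂ) * En 1 θ)
          - w * (((g θ : ℝ):ℂ) * (starRingEnd ℂ) (En 1 θ))
          + (w * (starRingEnd ℂ) w) * ((g θ : ℝ):ℂ) := by
      intro θ
      rw [map_sub]
      linear_combination ((g θ : ℝ):ℂ) * hE1mul θ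
    simp only [hsplitL]
    rw [intervalIntegral.integral_add ((hiGC.sub hiL1).sub hiL2) hiL3,
      intervalIntegral.integral_sub (hiGC.sub hiL1) hiL2,
      intervalIntegral.integral_sub hiGC hiL1,
      intervalIntegral.integral_const_mul, intervalIntegral.integral_const_mul,
      intervalIntegral.integral_const_mul, hm0, hm1, hm1c]
    have hcw : (starRingEnd ℂ) w = (starRingEnd ℂ) (b 1) * r / (2 * (1 - (α:ℂ))) := by
      rw [hwdef, map_div₀, map_mul]
      simp [Complex.conj_ofReal, map_sub, map_ofNat]
    have hb1 : ((‖b 1‖ : ℝ):ℂ)^2 = b 1 * (starRingEnd ℂ) (b 1) := by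
      rw [Complex.mul_conj, Complex.normSq_eq_norm_sq]
      push_cast
      ring
    rw [hcw, hwdef]
    push_cast
    rw [hb1]
    field_simp
    ring
  -- the bound
  have hnorm : ‖∫ θ in (0:ℝ)..(2*Real.pi), ((g θ : ℝ):ℂ) * (En 1 θ - w)^2‖
      ≤ 2*Real.pi*(1-α) - Real.pi * r^2 * (‖b 1‖)^2/(2*(1-α)) := by
    have h1 : ‖∫ θ in (0:ℝ)..(2*Real.pi), ((g θ : ℝ):ℂ) * (En 1 θ - w)^2‖
        ≤ ∫ θ in (0:ℝ)..(2*Real.pi), ‖((g θ : ℝ):ℂ) * (En 1 θ - w)^2‖ :=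
      intervalIntegral.norm_integral_le_integral_norm (by positivity)
    have hpt2 : ∀ θ:ℝ, ‖((g θ : ℝ):ℂ) * (En 1 θ - w)^2‖
        = (((g θ : ℝ):ℂ) * ((En 1 θ - w) * (starRingEnd ℂ) (En 1 θ - w))).re := by
      intro θ
      rw [Complex.mul_conj]
      have : (((g θ : ℝ):ℂ) * ((Complex.normSq (En 1 θ - w) : ℝ):ℂ)).re
          = g θ * Complex.normSq (En 1 θ - w) := by
        norm_cast
      rw [this, norm_mul, norm_pow]
      simp only [Complex.norm_real, Real.norm_eq_abs, Complex.normSq_eq_norm_sq]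
      rw [_root_.abs_of_nonneg (hg0 θ)]
    have h2 : ∫ θ in (0:ℝ)..(2*Real.pi), ‖((g θ : ℝ):ℂ) * (En 1 θ - w)^2‖
        = (∫ θ in (0:ℝ)..(2*Real.pi),
            ((g θ : ℝ):ℂ) * ((En 1 θ - w) * (starRingEnd ℂ) (En 1 θ - w))).re := by
      simp only [hpt2]
      exact myre Real.two_pi_pos.le
        ((hgc.mul (((hEcont 1).sub continuous_const).mul
          (Complex.continuous_conj.comp ((hEcont 1).sub continuous_const)))).intervalIntegrable _ _)
    calc ‖_‖ ≤ _ := h1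
      _ = _ := h2
      _ = _ := by rw [hL, Complex.ofReal_re]
  rw [hK] at hnorm
  have habsK : ‖Real.pi * r^2 * (b 2 - b 1 ^ 2 / (2 * (1 - (α:ℂ))))‖
      = Real.pi * r^2 * ‖b 2 - b 1 ^ 2 / (2 * (1 - (α:ℂ)))‖ := by
    rw [norm_mul, norm_mul]
    have : ‖((Real.pi : ℂ))‖ = Real.pi := by
      rw [Complex.norm_real, Real.norm_eq_abs, abs_of_pos Real.pi_pos]
    rw [this]
    have : ‖((r:ℝ):ℂ)^2‖ = r^2 := by
      rw [norm_pow, Complex.norm_real, Real.norm_eq_abs, abs_of_pos hr0]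
    rw [this]
  rw [habsK] at hnorm
  have hπ := Real.pi_pos
  have hr2 : (0:ℝ) < r^2 := by positivity
  have h3 : Real.pi * r^2 * (2 * (1 - α) / r^2 - (‖b 1‖)^2/(2*(1-α)))
      = 2*Real.pi*(1-α) - Real.pi * r^2 * (‖b 1‖)^2/(2*(1-α)) := by
    field_simp
  rw [← h3] at hnorm
  exact le_of_mul_le_mul_left hnorm (mul_pos hπ hr2)

end


theorem stmt_0 (α : ℝ) (hα0 : 0 ≤ α) (hα1 : α < 1)
    (p : ℂ → ℂ) (hp : DifferentiableOn ℂ p (ball (0:ℂ) 1))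
    (h0 : p 0 = 1)
    (b : ℕ → ℂ) (hb : ∀ n, b n = iteratedDeriv n p 0 / (Nat.factorial n))
    (hre : ∀ z ∈ ball (0:ℂ) 1, α ≤ (p z).re) :
    ‖b 2 - b 1 ^ 2 / (2 * (1 - (α:ℂ)))‖ ≤
      2 * (1 - α) - (‖b 1‖) ^ 2 / (2 * (1 - α)) := by
  have key : ∀ r : ℝ, 0 < r → r < 1 →
      ‖b 2 - b 1 ^ 2 / (2 * (1 - (α:ℂ)))‖ ≤
        2 * (1 - α) / r^2 - (‖b 1‖) ^ 2 / (2 * (1 - α)) :=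
    fun r h1 h2 => main_r hα1 hp h0 b hb hre h1 h2
  have hlim : Tendsto (fun r:ℝ => 2 * (1 - α) / r^2 - (‖b 1‖) ^ 2 / (2 * (1 - α)))
      (nhdsWithin 1 (Set.Iio (1:ℝ)))
      (nhds (2 * (1 - α) - (‖b 1‖) ^ 2 / (2 * (1 - α)))) := by
    have hcont : ContinuousAt (fun r:ℝ => 2 * (1 - α) / r^2
        - (‖b 1‖) ^ 2 / (2 * (1 - α))) 1 := by
      apply ContinuousAt.sub _ continuousAt_const
      exact ContinuousAt.div continuousAt_const (continuousAt_pow _ _) (by norm_num)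
    have h := (hcont.continuousWithinAt (s := Set.Iio (1:ℝ))).tendsto
    simpa using h
  refine ge_of_tendsto hlim ?_
  filter_upwards [Ioo_mem_nhdsLT_of_mem (show (1:ℝ) ∈ Set.Ioc (0:ℝ) 1 by norm_num)] with r hr
  exact key r hr.1 hr.2
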